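/- Let F be a field, n ≥ 2, and let c₁,…,c_{n−1} and d₁,…,d_{n−1} be nonzero elements of F. Set N = ∑_{i=1}^{n−1} cᵢ E_{i,i+1} and N' = ∑_{i=1}^{n−1} dᵢ E_{i,i+1}. Then there exists g ∈ SL_n(F) with g N g⁻¹ = N' if and only if ∏_{i=1}^{n−1} (dᵢ/cᵢ)^{n−i} is an n-th power in Fˣ. -/

import Mathlib

open Finset

section Aux

lemma my_prod_lt_succ {M : Type*} [CommMonoid M] {m : ℕ} (w : Fin m → M) (i : Fin m) :
    (∏ j : Fin m, if j.1 < i.1 + 1 then w j else 1)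
      = (∏ j : Fin m, if j.1 < i.1 then w j else 1) * w i := by
  have h : ∀ j : Fin m, (if j.1 < i.1 + 1 then w j else 1)
      = (if j.1 < i.1 then w j else 1) * (if j = i then w j else 1) := by
    intro j
    rcases eq_or_ne j i with rfl | hji
    · simp
    · have : j.1 ≠ i.1 := fun h => hji (Fin.ext h)
      by_cases h : j.1 < i.1 <;> simp [h, hji] <;> omega
  simp_rw [h]
  rw [Finset.prod_mul_distrib, Finset.prod_ite_eq' Finset.univ i w]
  simp

lemma my_prod_prod {M : Type*} [CommMonoid M] (n : ℕ) (w : Fin (n-1) → M) :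
    (∏ i : Fin n, ∏ j : Fin (n-1), if j.1 < i.1 then w j else 1)
      = ∏ j : Fin (n-1), w j ^ (n - 1 - j.1) := by
  rw [Finset.prod_comm]
  refine Finset.prod_congr rfl fun j _ => ?_
  have hj : j.1 < n := by omega
  have h : ∀ i : Fin n, (if j.1 < i.1 then w j else 1)
      = if (⟨j.1, hj⟩ : Fin n) < i then w j else 1 := fun i => rfl
  simp_rw [h]
  rw [← Finset.prod_filter, Finset.filter_lt_eq_Ioi, Finset.prod_const, Fin.card_Ioi]

lemma my_nilp_apply {F : Type*} [Field F] {n : ℕ} (hn : 2 ≤ n) (c : Fin (n - 1) → F)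
    (a b : Fin n) :
    (∑ i : Fin (n - 1), Matrix.single
        (⟨i.1, (by have := i.2; omega : i.1 + 0 < n)⟩ : Fin n) (⟨i.1 + 1, (by have := i.2; omega : i.1 + 1 + 0 < n)⟩ : Fin n) (c i)) a b
      = if h : a.1 + 1 = b.1 then c ⟨a.1, by have := b.2; omega⟩ else 0 := by
  rw [Matrix.sum_apply]
  split
  · next h =>
    rw [Finset.sum_eq_single (⟨a.1, by have := b.2; omega⟩ : Fin (n-1))]
    · rw [show (⟨(⟨a.1, by have := b.2; omega⟩ : Fin (n-1)).1, by omega⟩ : Fin n) = a from rfl,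
        show (⟨(⟨a.1, by have := b.2; omega⟩ : Fin (n-1)).1 + 1, by omega⟩ : Fin n) = b from
          Fin.ext (by simpa using h)]
      exact Matrix.single_apply_same a b _
    · intro i _ hi
      apply Matrix.single_apply_of_ne
      rintro ⟨h1, h2⟩
      exact hi (Fin.ext (by simpa using (Fin.ext_iff.mp h1)))
    · simp
  · next h =>
    apply Finset.sum_eq_zero
    intro i _
    apply Matrix.single_apply_of_ne
    rintro ⟨h1, h2⟩
    apply h
    have e1 : a.1 = i.1 := Fin.ext_iff.mp h1.symm
    have e2 : b.1 = i.1 + 1 := Fin.ext_iff.mp h2.symm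
    omega

lemma my_mul_nilp_apply {F : Type*} [Field F] {n : ℕ} (hn : 2 ≤ n) (c : Fin (n - 1) → F)
    (M : Matrix (Fin n) (Fin n) F) (a b : Fin n) :
    (M * (∑ i : Fin (n - 1), Matrix.single
        (⟨i.1, (by have := i.2; omega : i.1 + 0 < n)⟩ : Fin n) (⟨i.1 + 1, (by have := i.2; omega : i.1 + 1 + 0 < n)⟩ : Fin n) (c i))) a b
      = if h : 1 ≤ b.1 then
          M a ⟨b.1 - 1, by omega⟩ * c ⟨b.1 - 1, by have := b.2; omega⟩ else 0 := by
  rw [Matrix.mul_apply]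
  simp_rw [my_nilp_apply hn c]
  split
  · next h =>
    rw [Finset.sum_eq_single (⟨b.1 - 1, by omega⟩ : Fin n)]
    · rw [dif_pos (by simp; omega)]
    · intro k _ hk
      rw [dif_neg, mul_zero]
      intro hkb
      exact hk (Fin.ext (show k.1 = b.1 - 1 by omega))
    · simp
  · next h =>
    apply Finset.sum_eq_zero
    intro k _
    rw [dif_neg (by omega), mul_zero]

lemma my_nilp_mul_apply {F : Type*} [Field F] {n : ℕ} (hn : 2 ≤ n) (d : Fin (n - 1) → F)
    (M : Matrix (Fin n) (Fin n) F) (a b : Fin n) :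
    ((∑ i : Fin (n - 1), Matrix.single
        (⟨i.1, (by have := i.2; omega : i.1 + 0 < n)⟩ : Fin n) (⟨i.1 + 1, (by have := i.2; omega : i.1 + 1 + 0 < n)⟩ : Fin n) (d i))
        * M) a b
      = if h : a.1 < n - 1 then
          d ⟨a.1, h⟩ * M ⟨a.1 + 1, by omega⟩ b else 0 := by
  rw [Matrix.mul_apply]
  simp_rw [my_nilp_apply hn d]
  split
  · next h =>
    rw [Finset.sum_eq_single (⟨a.1 + 1, by omega⟩ : Fin n)]
    · rw [dif_pos (by simp)]
    · intro k _ hk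
      rw [dif_neg, zero_mul]
      intro hak
      exact hk (Fin.ext (show k.1 = a.1 + 1 by omega))
    · simp
  · next h =>
    apply Finset.sum_eq_zero
    intro k _
    rw [dif_neg (by omega), zero_mul]

lemma my_PQ {F : Type*} [Field F] {n : ℕ} (c d : Fin (n - 1) → F) (hc : ∀ i, c i ≠ 0)
    (hd : ∀ i, d i ≠ 0) :
    (∏ j : Fin (n-1), (c j / d j) ^ (n - 1 - j.1)) * (∏ j : Fin (n-1), (d j / c j) ^ (n - 1 - j.1))
      = 1 := by
  rw [← Finset.prod_mul_distrib]
  apply Finset.prod_eq_one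
  intro j _
  rw [← mul_pow, div_mul_div_comm, mul_comm (c j), div_self (by simp [hc j, hd j]), one_pow]

end Aux

/-- Let `F` be a field, `n ≥ 2`, and let `c₁,…,c_{n−1}` and `d₁,…,d_{n−1}` be nonzero elements
of `F`.  Set `N = ∑ cᵢ E_{i,i+1}` and `N' = ∑ dᵢ E_{i,i+1}`.  Then there exists
`g ∈ SL_n(F)` with `g N g⁻¹ = N'` if and only if `∏_{i=1}^{n−1} (dᵢ/cᵢ)^{n−i}` is an `n`-th
power in `Fˣ`. -/
theorem slConj_regular_nilpotent_iff_nthPower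
    {F : Type*} [Field F] (n : ℕ) (hn : 2 ≤ n)
    (c d : Fin (n - 1) → F) (hc : ∀ i, c i ≠ 0) (hd : ∀ i, d i ≠ 0) :
    (∃ g : Matrix.SpecialLinearGroup (Fin n) F,
        (g : Matrix (Fin n) (Fin n) F) *
          (∑ i : Fin (n - 1), Matrix.single
            (⟨i.1, by have := i.2; omega⟩ : Fin n) (⟨i.1 + 1, by have := i.2; omega⟩ : Fin n) (c i)) *
          ((g⁻¹ : Matrix.SpecialLinearGroup (Fin n) F) : Matrix (Fin n) (Fin n) F) =
        ∑ i : Fin (n - 1), Matrix.single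
            (⟨i.1, by have := i.2; omega⟩ : Fin n) (⟨i.1 + 1, by have := i.2; omega⟩ : Fin n) (d i)) ↔
      ∃ y : Fˣ, (y : F) ^ n = ∏ i : Fin (n - 1), (d i / c i) ^ (n - 1 - i.1) := by
  set N : Matrix (Fin n) (Fin n) F := ∑ i : Fin (n - 1), Matrix.single
            (⟨i.1, by have := i.2; omega⟩ : Fin n) (⟨i.1 + 1, by have := i.2; omega⟩ : Fin n) (c i)
    with hN
  set N' : Matrix (Fin n) (Fin n) F := ∑ i : Fin (n - 1), Matrix.single
            (⟨i.1, by have := i.2; omega⟩ : Fin n) (⟨i.1 + 1, by have := i.2; omega⟩ : Fin n) (d i)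
    with hN'
  constructor
  · rintro ⟨g, hg⟩
    set G : Matrix (Fin n) (Fin n) F := (g : Matrix (Fin n) (Fin n) F) with hGdef
    have hginv : ((g⁻¹ : Matrix.SpecialLinearGroup (Fin n) F) : Matrix (Fin n) (Fin n) F) * G = 1 := by
      rw [hGdef, ← Matrix.SpecialLinearGroup.coe_mul, inv_mul_cancel,
        Matrix.SpecialLinearGroup.coe_one]
    have E : G * N = N' * G := by
      calc G * N = G * N * (((g⁻¹ : Matrix.SpecialLinearGroup (Fin n) F) :
            Matrix (Fin n) (Fin n) F) * G) := by rw [hginv, mul_one]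
        _ = (G * N * ((g⁻¹ : Matrix.SpecialLinearGroup (Fin n) F) :
            Matrix (Fin n) (Fin n) F)) * G := by simp only [mul_assoc]
        _ = N' * G := by rw [hg]
    have E' : ∀ a b : Fin n,
        (if h : 1 ≤ b.1 then G a ⟨b.1 - 1, by omega⟩ * c ⟨b.1 - 1, by have := b.2; omega⟩ else 0)
          = (if h : a.1 < n - 1 then d ⟨a.1, h⟩ * G ⟨a.1 + 1, by omega⟩ b else 0) := by
      intro a b
      rw [← my_mul_nilp_apply hn c G a b, ← my_nilp_mul_apply hn d G a b, ← hN, ← hN', E]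
    have hstep : ∀ (ai bi : ℕ) (ha : ai < n - 1) (hb : bi < n - 1),
        G ⟨ai, by omega⟩ ⟨bi, by omega⟩ * c ⟨bi, hb⟩
          = d ⟨ai, ha⟩ * G ⟨ai + 1, by omega⟩ ⟨bi + 1, by omega⟩ := by
      intro ai bi ha hb
      have h := E' ⟨ai, by omega⟩ ⟨bi + 1, by omega⟩
      rw [dif_pos (by simp), dif_pos (by simpa using ha)] at h
      exact h
    have hG0 : ∀ a : Fin n, 1 ≤ a.1 → G a ⟨0, by omega⟩ = 0 := by
      intro a ha
      have h := E' ⟨a.1 - 1, by omega⟩ ⟨0, by omega⟩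
      rw [dif_neg (by simp), dif_pos (show a.1 - 1 < n - 1 by have := a.2; omega)] at h
      have h2 := (mul_eq_zero.mp h.symm).resolve_left (hd _)
      rw [show (⟨(a.1 - 1) + 1, by omega⟩ : Fin n) = a from
        Fin.ext (show (a.1 - 1) + 1 = a.1 by omega)] at h2
      exact h2
    have hlow : ∀ (bi : ℕ) (hb : bi < n) (a : Fin n), bi < a.1 → G a ⟨bi, hb⟩ = 0 := by
      intro bi
      induction bi with
      | zero => intro hb a ha; exact hG0 a ha
      | succ k ih =>
        intro hb a ha
        have ha1 : a.1 - 1 < n - 1 := by have := a.2; omega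
        have hk : k < n - 1 := by have := a.2; omega
        have h := hstep (a.1 - 1) k ha1 hk
        rw [ih (by omega) ⟨a.1 - 1, by omega⟩ (show k < a.1 - 1 by omega), zero_mul] at h
        have h2 := (mul_eq_zero.mp h.symm).resolve_left (hd _)
        rw [show (⟨(a.1 - 1) + 1, by omega⟩ : Fin n) = a from
          Fin.ext (show (a.1 - 1) + 1 = a.1 by omega)] at h2
        exact h2
    have hdiag : ∀ (i : ℕ) (hi : i < n), G ⟨i, hi⟩ ⟨i, hi⟩
        = G ⟨0, by omega⟩ ⟨0, by omega⟩ * ∏ j : Fin (n-1), (if j.1 < i then c j / d j else 1) := by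
      intro i
      induction i with
      | zero => simp
      | succ k ih =>
        intro hi
        have hk : k < n - 1 := by omega
        have h := hstep k k hk hk
        have h2 : G ⟨k + 1, by omega⟩ ⟨k + 1, by omega⟩
            = G ⟨k, by omega⟩ ⟨k, by omega⟩ * (c ⟨k, hk⟩ / d ⟨k, hk⟩) := by
          rw [← mul_div_assoc, h, mul_comm (d ⟨k, hk⟩), mul_div_assoc, div_self (hd ⟨k, hk⟩),
            mul_one]
        rw [h2, ih (by omega), my_prod_lt_succ (fun j => c j / d j) ⟨k, hk⟩, ← mul_assoc]
    have hut : G.BlockTriangular id := by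
      intro i j hij
      have h := hlow j.1 j.2 i hij
      rwa [show (⟨j.1, j.2⟩ : Fin n) = j from Fin.ext rfl] at h
    have hdet1 : ∏ i : Fin n, G i i = 1 := by
      rw [← Matrix.det_of_upperTriangular hut, hGdef]
      exact g.det_coe
    have hP : ∏ i : Fin n, G i i = G ⟨0, by omega⟩ ⟨0, by omega⟩ ^ n *
        ∏ j : Fin (n-1), (c j / d j) ^ (n - 1 - j.1) := by
      calc ∏ i : Fin n, G i i
          = ∏ i : Fin n, (G ⟨0, by omega⟩ ⟨0, by omega⟩ *
              ∏ j : Fin (n-1), if j.1 < i.1 then c j / d j else 1) :=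
            Finset.prod_congr rfl fun i _ => hdiag i.1 i.2
        _ = _ := by
            rw [Finset.prod_mul_distrib, Finset.prod_const, Finset.card_univ, Fintype.card_fin,
              my_prod_prod n (fun j => c j / d j)]
    have key : G ⟨0, by omega⟩ ⟨0, by omega⟩ ^ n *
        (∏ j : Fin (n-1), (c j / d j) ^ (n - 1 - j.1)) = 1 := by rw [← hP, hdet1]
    have hG00 : G ⟨0, by omega⟩ ⟨0, by omega⟩ ≠ 0 := by
      intro h0
      rw [h0, zero_pow (by omega), zero_mul] at key
      exact zero_ne_one key
    have hQ : G ⟨0, by omega⟩ ⟨0, by omega⟩ ^ n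
        = ∏ j : Fin (n-1), (d j / c j) ^ (n - 1 - j.1) := by
      calc G ⟨0, by omega⟩ ⟨0, by omega⟩ ^ n
          = G ⟨0, by omega⟩ ⟨0, by omega⟩ ^ n *
            ((∏ j : Fin (n-1), (c j / d j) ^ (n - 1 - j.1)) *
              (∏ j : Fin (n-1), (d j / c j) ^ (n - 1 - j.1))) := by
            rw [my_PQ c d hc hd, mul_one]
        _ = _ := by rw [← mul_assoc, key, one_mul]
    exact ⟨Units.mk0 _ hG00, by simpa using hQ⟩
  · rintro ⟨y, hy⟩
    have hm : 1 ≤ n - 1 := by omega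
    set gd : Fin n → F := fun i => (y : F) * ∏ j : Fin (n-1), (if j.1 < i.1 then c j / d j else 1)
      with hgd
    have hdet : (Matrix.diagonal gd).det = 1 := by
      rw [Matrix.det_diagonal]
      simp only [hgd]
      rw [Finset.prod_mul_distrib, Finset.prod_const, Finset.card_univ, Fintype.card_fin,
        my_prod_prod n (fun j => c j / d j), hy]
      exact my_PQ d c hd hc
    refine ⟨⟨Matrix.diagonal gd, hdet⟩, ?_⟩
    set G : Matrix.SpecialLinearGroup (Fin n) F := ⟨Matrix.diagonal gd, hdet⟩ with hG
    have hGi : (G : Matrix (Fin n) (Fin n) F) * ((G⁻¹ : Matrix.SpecialLinearGroup (Fin n) F) :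
        Matrix (Fin n) (Fin n) F) = 1 := by
      rw [← Matrix.SpecialLinearGroup.coe_mul, mul_inv_cancel,
        Matrix.SpecialLinearGroup.coe_one]
    have hcomm : (G : Matrix (Fin n) (Fin n) F) * N = N' * (G : Matrix (Fin n) (Fin n) F) := by
      have hGd : (G : Matrix (Fin n) (Fin n) F) = Matrix.diagonal gd := rfl
      rw [hGd]
      ext a b
      rw [Matrix.diagonal_mul, Matrix.mul_diagonal, hN, hN',
        my_nilp_apply hn c a b, my_nilp_apply hn d a b]
      split
      · next h =>
        have ha : a.1 < n - 1 := by have := b.2; omega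
        have hb : gd b = gd a * (c ⟨a.1, ha⟩ / d ⟨a.1, ha⟩) := by
          simp only [hgd]
          have hb1 : b.1 = a.1 + 1 := h.symm
          rw [hb1, mul_assoc]
          congr 1
          exact my_prod_lt_succ (fun j => c j / d j) ⟨a.1, ha⟩
        rw [hb, mul_comm (d ⟨a.1, ha⟩), mul_assoc (gd a), div_mul_cancel₀ _ (hd ⟨a.1, ha⟩)]
      · simp
    rw [hcomm, mul_assoc, hGi, mul_one]
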